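/- arXiv:2401.01859 — 2 statements merged into one kernel-verified Lean document; each statement's English description precedes it below -/
import Mathlib

section
/- Let G be a group and let Γ be a subgroup of G acting on G by left translations. Let V be a finite-dimensional complex inner product space and ω : Γ → GL(V) a group homomorphism. Let u, u' : G → ℝ be functions with 0 ≤ u(x), u'(x) ≤ 1 for all x, such that for every x ∈ G the sets {γ ∈ Γ : u(γx) ≠ 0} and {γ ∈ Γ : u'(γx) ≠ 0} are finite and ∑_{γ∈Γ} u(γx) = ∑_{γ∈Γ} u'(γx) = 1. Assume there exist γ₁,…,γₙ ∈ Γ and c₁,…,cₙ > 0 with u'(x) ≤ ∑_{j=1}^n c_j u(γ_j x) for all x ∈ G, and δ₁,…,δ_m ∈ Γ and d₁,…,d_m > 0 with u(x) ≤ ∑_{i=1}^m d_i u'(δ_i x) for all x ∈ G. Then there exists a constant C > 0 such that for all x ∈ G and all v ∈ V one has (1/C)·‖v‖²_{u,x} ≤ ‖v‖²_{u',x} ≤ C·‖v‖²_{u,x}. -/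
open Function

lemma aux_oneside
    {G : Type*} [Group G] (Γ : Subgroup G)
    {V : Type*} [NormedAddCommGroup V] [InnerProductSpace ℂ V] [FiniteDimensional ℂ V]
    (ω : Γ →* (V →ₗ[ℂ] V)ˣ)
    (u u' : G → ℝ)
    (hu0 : ∀ x : G, 0 ≤ u x) (hu'0 : ∀ x : G, 0 ≤ u' x)
    (hufin : ∀ x : G, {γ : Γ | u ((γ : G) * x) ≠ 0}.Finite)
    (hu'fin : ∀ x : G, {γ : Γ | u' ((γ : G) * x) ≠ 0}.Finite)
    (hdom : ∃ (n : ℕ) (γs : Fin n → Γ) (c : Fin n → ℝ), (∀ j, 0 < c j) ∧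
      ∀ x : G, u' x ≤ ∑ j, c j * u ((γs j : G) * x)) :
    ∃ K > (0 : ℝ), ∀ (x : G) (v : V),
      (∑ᶠ γ : Γ, u' ((γ : G) * x) * ‖(ω γ : V →ₗ[ℂ] V) v‖ ^ 2) ≤
        K * ∑ᶠ γ : Γ, u ((γ : G) * x) * ‖(ω γ : V →ₗ[ℂ] V) v‖ ^ 2 := by
  classical
  obtain ⟨n, γs, c, hc, hle⟩ := hdom
  set M : Fin n → ℝ := fun j =>
    ‖LinearMap.toContinuousLinearMap (((ω (γs j))⁻¹ : (V →ₗ[ℂ] V)ˣ) : V →ₗ[ℂ] V)‖ with hM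
  set K₀ : ℝ := ∑ j, c j * M j ^ 2 with hK₀
  have hK₀0 : 0 ≤ K₀ := Finset.sum_nonneg fun j _ =>
    mul_nonneg (hc j).le (pow_nonneg (norm_nonneg _) 2)
  refine ⟨K₀ + 1, by linarith, fun x v => ?_⟩
  set F : Γ → ℝ := fun γ => u ((γ : G) * x) * ‖(ω γ : V →ₗ[ℂ] V) v‖ ^ 2 with hF
  set F' : Γ → ℝ := fun γ => u' ((γ : G) * x) * ‖(ω γ : V →ₗ[ℂ] V) v‖ ^ 2 with hF'
  have hF0 : ∀ γ, 0 ≤ F γ := fun γ =>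
    mul_nonneg (hu0 _) (pow_nonneg (norm_nonneg _) 2)
  have hFsupp : support F ⊆ {γ : Γ | u ((γ : G) * x) ≠ 0} := by
    intro γ hγ
    simp only [Set.mem_setOf_eq]
    intro h
    apply hγ
    simp [hF, h]
  have hF'supp : support F' ⊆ {γ : Γ | u' ((γ : G) * x) ≠ 0} := by
    intro γ hγ
    simp only [Set.mem_setOf_eq]
    intro h
    apply hγ
    simp [hF', h]
  set s' : Finset Γ := (hu'fin x).toFinset with hs'
  set t : Finset Γ := (hufin x).toFinset with ht
  have hS' : ∑ᶠ γ : Γ, F' γ = ∑ γ ∈ s', F' γ :=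
    finsum_eq_sum_of_support_subset _ (by rwa [hs', Set.Finite.coe_toFinset])
  -- key pointwise norm bound
  have hnorm : ∀ (j : Fin n) (γ : Γ),
      ‖(ω γ : V →ₗ[ℂ] V) v‖ ^ 2 ≤ M j ^ 2 * ‖(ω (γs j * γ) : V →ₗ[ℂ] V) v‖ ^ 2 := by
    intro j γ
    have hcomp : (((ω (γs j))⁻¹ : (V →ₗ[ℂ] V)ˣ) : V →ₗ[ℂ] V)
        ((ω (γs j * γ) : V →ₗ[ℂ] V) v) = (ω γ : V →ₗ[ℂ] V) v := by
      have h1 : (ω (γs j))⁻¹ * ω (γs j * γ) = ω γ := by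
        rw [map_mul, inv_mul_cancel_left]
      calc (((ω (γs j))⁻¹ : (V →ₗ[ℂ] V)ˣ) : V →ₗ[ℂ] V) ((ω (γs j * γ) : V →ₗ[ℂ] V) v)
          = (((ω (γs j))⁻¹ * ω (γs j * γ) : (V →ₗ[ℂ] V)ˣ) : V →ₗ[ℂ] V) v := rfl
        _ = (ω γ : V →ₗ[ℂ] V) v := by rw [h1]
    have hb : ‖(ω γ : V →ₗ[ℂ] V) v‖ ≤ M j * ‖(ω (γs j * γ) : V →ₗ[ℂ] V) v‖ := by
      rw [← hcomp, hM]
      have := (LinearMap.toContinuousLinearMap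
        (((ω (γs j))⁻¹ : (V →ₗ[ℂ] V)ˣ) : V →ₗ[ℂ] V)).le_opNorm
        ((ω (γs j * γ) : V →ₗ[ℂ] V) v)
      simpa only [LinearMap.coe_toContinuousLinearMap'] using this
    have := mul_self_le_mul_self (norm_nonneg _) hb
    calc ‖(ω γ : V →ₗ[ℂ] V) v‖ ^ 2
        ≤ (M j * ‖(ω (γs j * γ) : V →ₗ[ℂ] V) v‖) ^ 2 :=
          pow_le_pow_left₀ (norm_nonneg _) hb 2
      _ = M j ^ 2 * ‖(ω (γs j * γ) : V →ₗ[ℂ] V) v‖ ^ 2 := by ring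
  -- pointwise bound
  have hpt : ∀ γ ∈ s', F' γ ≤ ∑ j, c j * M j ^ 2 * F (γs j * γ) := by
    intro γ _
    have h1 : u' ((γ : G) * x) ≤ ∑ j, c j * u (((γs j * γ : Γ) : G) * x) := by
      have := hle ((γ : G) * x)
      simpa [mul_assoc] using this
    calc F' γ = u' ((γ : G) * x) * ‖(ω γ : V →ₗ[ℂ] V) v‖ ^ 2 := rfl
      _ ≤ (∑ j, c j * u (((γs j * γ : Γ) : G) * x)) * ‖(ω γ : V →ₗ[ℂ] V) v‖ ^ 2 :=
          mul_le_mul_of_nonneg_right h1 (pow_nonneg (norm_nonneg _) 2)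
      _ = ∑ j, c j * u (((γs j * γ : Γ) : G) * x) * ‖(ω γ : V →ₗ[ℂ] V) v‖ ^ 2 := by
          rw [Finset.sum_mul]
      _ ≤ ∑ j, c j * M j ^ 2 * F (γs j * γ) := by
          apply Finset.sum_le_sum
          intro j _
          have := hnorm j γ
          have hn : 0 ≤ c j * u (((γs j * γ : Γ) : G) * x) :=
            mul_nonneg (hc j).le (hu0 _)
          calc c j * u (((γs j * γ : Γ) : G) * x) * ‖(ω γ : V →ₗ[ℂ] V) v‖ ^ 2
              ≤ c j * u (((γs j * γ : Γ) : G) * x) *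
                (M j ^ 2 * ‖(ω (γs j * γ) : V →ₗ[ℂ] V) v‖ ^ 2) :=
                mul_le_mul_of_nonneg_left this hn
            _ = c j * M j ^ 2 * F (γs j * γ) := by simp [hF]; ring
  -- inner sum bound
  have hinner : ∀ j : Fin n, ∑ γ ∈ s', F (γs j * γ) ≤ ∑ᶠ γ : Γ, F γ := by
    intro j
    have hinj : Function.Injective (fun γ : Γ => γs j * γ) := fun a b h => by
      simpa using mul_left_cancel h
    have him : ∑ γ ∈ s', F (γs j * γ) = ∑ δ ∈ s'.image (fun γ => γs j * γ), F δ :=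
      (Finset.sum_image (fun a _ b _ h => hinj h)).symm
    have hSeq : ∑ᶠ γ : Γ, F γ = ∑ δ ∈ s'.image (fun γ => γs j * γ) ∪ t, F δ := by
      apply finsum_eq_sum_of_support_subset
      refine hFsupp.trans ?_
      intro δ hδ
      simp only [Finset.coe_union, Set.mem_union]
      right
      rwa [ht, Set.Finite.coe_toFinset]
    rw [him, hSeq]
    exact Finset.sum_le_sum_of_subset_of_nonneg Finset.subset_union_left
      (fun δ _ _ => hF0 δ)
  have hSnn : 0 ≤ ∑ᶠ γ : Γ, F γ := finsum_nonneg hF0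
  calc ∑ᶠ γ : Γ, F' γ = ∑ γ ∈ s', F' γ := hS'
    _ ≤ ∑ γ ∈ s', ∑ j, c j * M j ^ 2 * F (γs j * γ) := Finset.sum_le_sum hpt
    _ = ∑ j, ∑ γ ∈ s', c j * M j ^ 2 * F (γs j * γ) := Finset.sum_comm
    _ = ∑ j, c j * M j ^ 2 * ∑ γ ∈ s', F (γs j * γ) := by
        simp [Finset.mul_sum]
    _ ≤ ∑ j, c j * M j ^ 2 * ∑ᶠ γ : Γ, F γ := by
        apply Finset.sum_le_sum
        intro j _
        exact mul_le_mul_of_nonneg_left (hinner j)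
          (mul_nonneg (hc j).le (pow_nonneg (norm_nonneg _) 2))
    _ = K₀ * ∑ᶠ γ : Γ, F γ := by rw [hK₀, Finset.sum_mul]
    _ ≤ (K₀ + 1) * ∑ᶠ γ : Γ, F γ := by nlinarith

/-- Equivalence of the twisted hermitean metrics attached to two
partition functions `u`, `u'` on `G` for the flat bundle `E_ω`. -/
theorem metrics_equivalent
    {G : Type*} [Group G] (Γ : Subgroup G)
    {V : Type*} [NormedAddCommGroup V] [InnerProductSpace ℂ V] [FiniteDimensional ℂ V]
    (ω : Γ →* (V →ₗ[ℂ] V)ˣ)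
    (u u' : G → ℝ)
    (hu01 : ∀ x : G, 0 ≤ u x ∧ u x ≤ 1)
    (hu'01 : ∀ x : G, 0 ≤ u' x ∧ u' x ≤ 1)
    (hufin : ∀ x : G, {γ : Γ | u ((γ : G) * x) ≠ 0}.Finite)
    (hu'fin : ∀ x : G, {γ : Γ | u' ((γ : G) * x) ≠ 0}.Finite)
    (husum : ∀ x : G, ∑ᶠ γ : Γ, u ((γ : G) * x) = 1)
    (hu'sum : ∀ x : G, ∑ᶠ γ : Γ, u' ((γ : G) * x) = 1)
    (hdom : ∃ (n : ℕ) (γs : Fin n → Γ) (c : Fin n → ℝ), (∀ j, 0 < c j) ∧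
      ∀ x : G, u' x ≤ ∑ j, c j * u ((γs j : G) * x))
    (hdom' : ∃ (m : ℕ) (δs : Fin m → Γ) (d : Fin m → ℝ), (∀ i, 0 < d i) ∧
      ∀ x : G, u x ≤ ∑ i, d i * u' ((δs i : G) * x)) :
    ∃ C > (0 : ℝ), ∀ (x : G) (v : V),
      (1 / C) * (∑ᶠ γ : Γ, u ((γ : G) * x) * ‖(ω γ : V →ₗ[ℂ] V) v‖ ^ 2) ≤
          ∑ᶠ γ : Γ, u' ((γ : G) * x) * ‖(ω γ : V →ₗ[ℂ] V) v‖ ^ 2 ∧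
        (∑ᶠ γ : Γ, u' ((γ : G) * x) * ‖(ω γ : V →ₗ[ℂ] V) v‖ ^ 2) ≤
          C * ∑ᶠ γ : Γ, u ((γ : G) * x) * ‖(ω γ : V →ₗ[ℂ] V) v‖ ^ 2 := by
  obtain ⟨K, hK, hKle⟩ := aux_oneside Γ ω u u' (fun x => (hu01 x).1) (fun x => (hu'01 x).1)
    hufin hu'fin hdom
  obtain ⟨K', hK', hK'le⟩ := aux_oneside Γ ω u' u (fun x => (hu'01 x).1) (fun x => (hu01 x).1)
    hu'fin hufin hdom'
  refine ⟨max K K', lt_max_of_lt_left hK, fun x v => ?_⟩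
  set S := ∑ᶠ γ : Γ, u ((γ : G) * x) * ‖(ω γ : V →ₗ[ℂ] V) v‖ ^ 2 with hS
  set S' := ∑ᶠ γ : Γ, u' ((γ : G) * x) * ‖(ω γ : V →ₗ[ℂ] V) v‖ ^ 2 with hS'
  have hSnn : 0 ≤ S := finsum_nonneg fun γ =>
    mul_nonneg (hu01 _).1 (pow_nonneg (norm_nonneg _) 2)
  have hS'nn : 0 ≤ S' := finsum_nonneg fun γ =>
    mul_nonneg (hu'01 _).1 (pow_nonneg (norm_nonneg _) 2)
  have hC : (0 : ℝ) < max K K' := lt_max_of_lt_left hK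
  constructor
  · have h1 : S ≤ K' * S' := hK'le x v
    have h2 : K' * S' ≤ max K K' * S' :=
      mul_le_mul_of_nonneg_right (le_max_right _ _) hS'nn
    rw [div_mul_eq_mul_div, one_mul, div_le_iff₀ hC]
    calc S ≤ max K K' * S' := h1.trans h2
      _ = S' * max K K' := mul_comm _ _
  · have h1 : S' ≤ K * S := hKle x v
    have h2 : K * S ≤ max K K' * S :=
      mul_le_mul_of_nonneg_right (le_max_left _ _) hSnn
    exact h1.trans h2
end

section
/- Let G be a locally compact, Hausdorff, totally disconnected topological group, H a complex Hilbert space, and ρ a continuous representation of G on H. Assume that ρ is a compact representation in the sense that for every compact open subgroup K of G, with μ_K the Haar probability measure on K, the operator P_K : H → H given by the Bochner integral P_K v = ∫_K ρ(k) v dμ_K(k) is a compact operator. Then for every pair of closed ρ-invariant subspaces A ⊊ B of H there exist closed ρ-invariant subspaces C, D with A ⊆ C ⊊ D ⊆ B such that there is no closed ρ-invariant subspace E with C ⊊ E ⊊ D. In particular, if H ≠ 0, the representation ρ has an irreducible subquotient. -/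
open MeasureTheory

/-- A closed subspace invariant under a representation by invertible bounded
operators. -/
def IsClosedInvariantSubspace {G H : Type*} [Group G]
    [NormedAddCommGroup H] [InnerProductSpace ℂ H]
    (ρ : G →* (H →L[ℂ] H)ˣ) (U : Submodule ℂ H) : Prop :=
  IsClosed (U : Set H) ∧ ∀ g : G, ∀ v ∈ U, (ρ g : H →L[ℂ] H) v ∈ U

section VD
open Set Pointwise

/-- W * T ⊆ W for some nbhd T of 1, when W is compact open. -/
lemma exist_mul_closure_nhd' {G : Type*} [Group G] [TopologicalSpace G] [IsTopologicalGroup G]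
    {W : Set G} (hWc : IsCompact W) (hWo : IsOpen W) : ∃ T ∈ nhds (1 : G), W * T ⊆ W := by
  apply hWc.induction_on (p := fun S ↦ ∃ T ∈ nhds (1 : G), S * T ⊆ W)
    ⟨Set.univ, by simp only [Filter.univ_mem, empty_mul, empty_subset, and_self]⟩
    (fun _ _ huv ⟨T, hT, mem⟩ ↦ ⟨T, hT, (mul_subset_mul_right huv).trans mem⟩)
    (fun U V ⟨T₁, hT₁, mem1⟩ ⟨T₂, hT₂, mem2⟩ ↦ ⟨T₁ ∩ T₂, Filter.inter_mem hT₁ hT₂, by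
      rw [union_mul]
      exact union_subset (mul_subset_mul_left inter_subset_left |>.trans mem1)
        (mul_subset_mul_left inter_subset_right |>.trans mem2)⟩)
  intro x memW
  have : (x, 1) ∈ (fun p : G × G ↦ p.1 * p.2) ⁻¹' W := by simp [memW]
  rcases isOpen_prod_iff.mp (continuous_mul.isOpen_preimage W hWo) x 1 this with
    ⟨U, V, Uopen, Vopen, xmemU, onememV, prodsub⟩
  have h6 : U * V ⊆ W := mul_subset_iff.mpr (fun _ hx _ hy ↦ prodsub (mk_mem_prod hx hy))
  exact ⟨U ∩ W, ⟨U, Uopen.mem_nhds xmemU, W, fun _ a ↦ a, rfl⟩,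
    V, Vopen.mem_nhds onememV, fun _ a ↦ h6 ((mul_subset_mul_right inter_subset_left) a)⟩

/-- van Dantzig: a locally compact Hausdorff totally disconnected group has arbitrarily
small compact open subgroups. -/
lemma vanDantzig {G : Type*} [Group G] [TopologicalSpace G] [IsTopologicalGroup G]
    [LocallyCompactSpace G] [T2Space G] [TotallyDisconnectedSpace G]
    {U : Set G} (hU : U ∈ nhds (1 : G)) :
    ∃ K : Subgroup G, IsCompact (K : Set G) ∧ IsOpen (K : Set G) ∧ (K : Set G) ⊆ U := by
  obtain ⟨U', hU'U, hU'o, h1U'⟩ := mem_nhds_iff.mp hU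
  obtain ⟨s, hsc, h1s, hsU'⟩ := exists_compact_subset hU'o h1U'
  obtain ⟨W, hWclopen, h1W, hWs⟩ :=
    loc_compact_Haus_tot_disc_of_zero_dim.mem_nhds_iff.mp (isOpen_interior.mem_nhds h1s)
  have hWc : IsCompact W := hsc.of_isClosed_subset hWclopen.1 (hWs.trans interior_subset)
  obtain ⟨T, hTnhds, hTW⟩ := exist_mul_closure_nhd' hWc hWclopen.2
  obtain ⟨U0, hU0T, hU0o, h1U0⟩ := mem_nhds_iff.mp hTnhds
  set T' : Set G := U0 ∩ U0⁻¹ with hT'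
  have hT'o : IsOpen T' := hU0o.inter hU0o.inv
  have h1T' : (1 : G) ∈ T' := ⟨h1U0, by simpa using h1U0⟩
  have hT'symm : T'⁻¹ = T' := by
    simp only [hT', Set.inter_inv, inv_inv, Set.inter_comm]
  have hWT' : W * T' ⊆ W := (mul_subset_mul_left (inter_subset_left.trans hU0T)).trans hTW
  have hKW : (Subgroup.closure T' : Set G) ⊆ W := by
    intro x hx
    have hx' : x ∈ Submonoid.closure T' := by
      have hx2 : x ∈ (Subgroup.closure T').toSubmonoid := hx
      rw [Subgroup.closure_toSubmonoid, hT'symm, Set.union_self] at hx2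
      exact hx2
    have key : ∀ w ∈ W, w * x ∈ W := by
      refine Submonoid.closure_induction (motive := fun y _ => ∀ w ∈ W, w * y ∈ W)
        (fun y hy w hw => hWT' (Set.mul_mem_mul hw hy)) (fun w hw => by simpa using hw)
        (fun y z _ _ hy hz w hw => by rw [← mul_assoc]; exact hz _ (hy w hw)) hx'
    simpa using key 1 h1W
  have hKopen : IsOpen (Subgroup.closure T' : Set G) :=
    Subgroup.isOpen_of_mem_nhds _ (Filter.mem_of_superset (hT'o.mem_nhds h1T')
      (Subgroup.subset_closure))
  have hKclosed : IsClosed (Subgroup.closure T' : Set G) :=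
    Subgroup.isClosed_of_isOpen _ hKopen
  exact ⟨Subgroup.closure T', hWc.of_isClosed_subset hKclosed hKW, hKopen,
    hKW.trans ((hWs.trans interior_subset).trans (hsU'.trans hU'U))⟩

end VD



theorem aux_between
    {G : Type*} [Group G] [TopologicalSpace G] [IsTopologicalGroup G]
    [LocallyCompactSpace G] [T2Space G] [TotallyDisconnectedSpace G]
    {H : Type*} [NormedAddCommGroup H] [InnerProductSpace ℂ H] [CompleteSpace H]
    (ρ : G →* (H →L[ℂ] H)ˣ)
    (hcont : Continuous fun p : G × H => (ρ p.1 : H →L[ℂ] H) p.2)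
    (hcomp : ∀ K : Subgroup G, IsCompact (K : Set G) → IsOpen (K : Set G) →
      ∀ [MeasurableSpace ↥K] [BorelSpace ↥K] (μ : Measure ↥K),
        μ.IsHaarMeasure → IsProbabilityMeasure μ →
          IsCompactOperator (fun v : H => ∫ k : ↥K, (ρ (k : G) : H →L[ℂ] H) v ∂μ))
    (A B : Submodule ℂ H) (hA : IsClosedInvariantSubspace ρ A)
    (hB : IsClosedInvariantSubspace ρ B) (hAB : A < B) :
    ∃ C D : Submodule ℂ H, IsClosedInvariantSubspace ρ C ∧
      IsClosedInvariantSubspace ρ D ∧ A ≤ C ∧ C < D ∧ D ≤ B ∧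
      ¬∃ E : Submodule ℂ H, IsClosedInvariantSubspace ρ E ∧ C < E ∧ E < D := by
  classical
  obtain ⟨v, hvB, hvA⟩ := SetLike.exists_of_lt hAB
  set ε := Metric.infDist v (A : Set H) with hε_def
  have hε : 0 < ε :=
    (hA.1.notMem_iff_infDist_pos ⟨0, A.zero_mem⟩).1 hvA
  -- open nbhd of 1 where ρ g v is ε/2-close to v
  have hcont1 : Continuous fun g : G => (ρ g : H →L[ℂ] H) v :=
    hcont.comp (continuous_id.prodMk continuous_const)
  have hΩ : {g : G | ‖(ρ g : H →L[ℂ] H) v - v‖ < ε / 2} ∈ nhds (1 : G) := by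
    have : IsOpen {g : G | ‖(ρ g : H →L[ℂ] H) v - v‖ < ε / 2} :=
      isOpen_lt (continuous_norm.comp (hcont1.sub continuous_const)) continuous_const
    refine this.mem_nhds ?_
    simp only [Set.mem_setOf_eq, map_one]
    simpa using half_pos hε
  obtain ⟨K, hKc, hKo, hKΩ⟩ := vanDantzig hΩ
  haveI : Nonempty ↥K := ⟨⟨1, K.one_mem⟩⟩
  haveI hKcs : CompactSpace ↥K := isCompact_iff_compactSpace.1 hKc
  letI : MeasurableSpace ↥K := borel ↥K
  haveI : BorelSpace ↥K := ⟨rfl⟩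
  set K₀ : TopologicalSpace.PositiveCompacts ↥K :=
    ⟨⟨Set.univ, isCompact_univ⟩, by simp⟩ with hK₀
  set μ : Measure ↥K := Measure.haarMeasure K₀ with hμ
  haveI hμHaar : μ.IsHaarMeasure := inferInstance
  haveI hμprob : IsProbabilityMeasure μ := ⟨by
    simpa [hμ, hK₀] using Measure.haarMeasure_self (K₀ := K₀)⟩
  -- the averaging operator
  have hcontk : ∀ u : H, Continuous fun k : ↥K => (ρ (k : G) : H →L[ℂ] H) u := fun u =>
    hcont.comp ((continuous_subtype_val).prodMk continuous_const)
  have hInt : ∀ u : H, Integrable (fun k : ↥K => (ρ (k : G) : H →L[ℂ] H) u) μ := by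
    intro u
    refine (hcontk u).integrable_of_hasCompactSupport ?_
    exact isCompact_univ.of_isClosed_subset (isClosed_tsupport _) (Set.subset_univ _)
  set P : H →ₗ[ℂ] H :=
    { toFun := fun u => ∫ k : ↥K, (ρ (k : G) : H →L[ℂ] H) u ∂μ
      map_add' := fun u₁ u₂ => by
        simp only [map_add]
        exact integral_add (hInt u₁) (hInt u₂)
      map_smul' := fun c u => by
        simp only [_root_.map_smul, RingHom.id_apply]
        exact integral_smul c _ } with hP
  have hPcomp : IsCompactOperator P := hcomp K hKc hKo μ hμHaar hμprob
  have hPcont : Continuous P := hPcomp.continuous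
  -- P maps closed invariant subspaces into themselves
  have hPmem : ∀ E : Submodule ℂ H, IsClosedInvariantSubspace ρ E → ∀ u ∈ E, P u ∈ E := by
    intro E hE u hu
    have hconv : Convex ℝ (E : Set H) := by
      have := (E.restrictScalars ℝ).convex
      simpa using this
    have := Convex.integral_mem hconv hE.1
      (Filter.Eventually.of_forall fun k : ↥K => hE.2 (k : G) u hu) (hInt u)
    exact this
  -- P u is K-fixed
  have hPfix : ∀ (u : H) (k₀ : ↥K), (ρ (k₀ : G) : H →L[ℂ] H) (P u) = P u := by
    intro u k₀
    have h1 : (ρ (k₀ : G) : H →L[ℂ] H) (P u)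
        = ∫ k : ↥K, (ρ (k₀ : G) : H →L[ℂ] H) ((ρ (k : G) : H →L[ℂ] H) u) ∂μ :=
      (ContinuousLinearMap.integral_comp_comm _ (hInt u)).symm
    have h2 : ∀ k : ↥K, (ρ (k₀ : G) : H →L[ℂ] H) ((ρ (k : G) : H →L[ℂ] H) u)
        = (ρ ((k₀ * k : ↥K) : G) : H →L[ℂ] H) u := by
      intro k
      simp [map_mul, Units.val_mul, ContinuousLinearMap.mul_apply]
    rw [h1]
    simp_rw [h2]
    exact integral_mul_left_eq_self (fun k : ↥K => (ρ ((k : ↥K) : G) : H →L[ℂ] H) u) k₀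
  -- K-fixed vectors are P-fixed
  have hPid : ∀ u : H, (∀ k : ↥K, (ρ (k : G) : H →L[ℂ] H) u = u) → P u = u := by
    intro u hu
    have : P u = ∫ _ : ↥K, u ∂μ := by
      simp only [hP, LinearMap.coe_mk, AddHom.coe_mk]
      exact integral_congr_ae (Filter.Eventually.of_forall fun k => hu k)
    rw [this, integral_const]
    simp
  -- P v is close to v
  have hPnorm : ‖P v - v‖ ≤ ε / 2 := by
    have heq : P v - v = ∫ k : ↥K, ((ρ (k : G) : H →L[ℂ] H) v - v) ∂μ := by
      rw [integral_sub (hInt v) (integrable_const v), integral_const]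
      simp only [Measure.real, measure_univ, ENNReal.toReal_one, one_smul]
      rfl
    rw [heq]
    have hbd : ∀ᵐ k : ↥K ∂μ, ‖(ρ (k : G) : H →L[ℂ] H) v - v‖ ≤ ε / 2 :=
      Filter.Eventually.of_forall fun k => le_of_lt (hKΩ k.2)
    have := norm_integral_le_of_norm_le_const hbd
      (f := fun k : ↥K => (ρ (k : G) : H →L[ℂ] H) v - v)
    simpa using this
  set w : H := P v with hw
  have hwB : w ∈ B := hPmem B hB v hvB
  have hwA : w ∉ A := by
    intro hwA
    have h1 : ε ≤ dist v w := Metric.infDist_le_dist_of_mem hwA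
    rw [dist_eq_norm, ← norm_neg] at h1
    simp only [neg_sub] at h1
    linarith
  -- the subspace of K-fixed vectors
  set F : Submodule ℂ H :=
    { carrier := {u : H | ∀ k : ↥K, (ρ (k : G) : H →L[ℂ] H) u = u}
      add_mem' := fun {a b} ha hb k => by simp [map_add, ha k, hb k]
      zero_mem' := fun k => by simp
      smul_mem' := fun c a ha k => by simp [_root_.map_smul, ha k] } with hF
  have hFmem : ∀ u : H, u ∈ F ↔ ∀ k : ↥K, (ρ (k : G) : H →L[ℂ] H) u = u := fun u => Iff.rfl
  have hFclosed : IsClosed (F : Set H) := by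
    have : (F : Set H) = ⋂ k : ↥K, {u : H | (ρ (k : G) : H →L[ℂ] H) u - u = 0} := by
      ext u
      simp only [Set.mem_iInter, Set.mem_setOf_eq, sub_eq_zero]
      exact hFmem u
    rw [this]
    exact isClosed_iInter fun k => isClosed_eq
      (((ρ (k : G) : H →L[ℂ] H).continuous).sub continuous_id) continuous_const
  have hPF : ∀ u : H, P u ∈ F := fun u k => hPfix u k
  have hwF : w ∈ F := hPF v
  -- F is finite dimensional
  haveI hFfin : FiniteDimensional ℂ ↥F := by
    obtain ⟨Q, hQc, hQnhds⟩ := hPcomp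
    obtain ⟨r, hr, hball⟩ := Metric.mem_nhds_iff.mp hQnhds
    have hSsub : Metric.closedBall (0 : H) (r / 2) ∩ (F : Set H) ⊆ Q := by
      rintro u ⟨hu1, hu2⟩
      have : u ∈ Metric.ball (0 : H) r := by
        rw [Metric.mem_ball, dist_zero_right]
        rw [Metric.mem_closedBall, dist_zero_right] at hu1
        linarith
      have := hball this
      rwa [Set.mem_preimage, hPid u hu2] at this
    have hScomp : IsCompact (Metric.closedBall (0 : H) (r / 2) ∩ (F : Set H)) :=
      hQc.of_isClosed_subset (Metric.isClosed_closedBall.inter hFclosed) hSsub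
    have hcball : IsCompact (Metric.closedBall (0 : ↥F) (r / 2)) := by
      rw [Topology.IsEmbedding.isCompact_iff (Topology.IsEmbedding.subtypeVal)]
      have : (Subtype.val '' Metric.closedBall (0 : ↥F) (r / 2))
          = Metric.closedBall (0 : H) (r / 2) ∩ (F : Set H) := by
        ext u
        constructor
        · rintro ⟨⟨u, hu⟩, hmem, rfl⟩
          refine ⟨?_, hu⟩
          simpa [Metric.mem_closedBall, dist_zero_right] using hmem
        · rintro ⟨h1, h2⟩
          refine ⟨⟨u, h2⟩, ?_, rfl⟩
          simpa [Metric.mem_closedBall, dist_zero_right] using h1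
      rw [this]
      exact hScomp
    exact FiniteDimensional.of_isCompact_closedBall₀ ℂ (by positivity) hcball
  -- D : smallest closed invariant subspace containing A and w, inside B
  set SD : Set (Submodule ℂ H) :=
    {E | IsClosedInvariantSubspace ρ E ∧ A ≤ E ∧ E ≤ B ∧ w ∈ E} with hSD
  have hBSD : B ∈ SD := ⟨hB, hAB.le, le_rfl, hwB⟩
  set D : Submodule ℂ H := sInf SD with hD
  have hDclosed : IsClosed (D : Set H) := by
    rw [hD, Submodule.coe_sInf]
    exact isClosed_biInter fun E hE => hE.1.1
  have hDinv : IsClosedInvariantSubspace ρ D := by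
    refine ⟨hDclosed, fun g u hu => ?_⟩
    rw [hD, Submodule.mem_sInf] at hu ⊢
    exact fun E hE => hE.1.2 g u (hu E hE)
  have hAD : A ≤ D := le_sInf fun E hE => hE.2.1
  have hDB : D ≤ B := sInf_le hBSD
  have hwD : w ∈ D := by
    rw [hD, Submodule.mem_sInf]; exact fun E hE => hE.2.2.2
  have hDmin : ∀ E ∈ SD, D ≤ E := fun E hE => sInf_le hE
  -- the poset for Zorn
  set S : Set (Submodule ℂ H) :=
    {E | IsClosedInvariantSubspace ρ E ∧ A ≤ E ∧ E ≤ D ∧ w ∉ E} with hS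
  have hAS : A ∈ S := ⟨hA, le_rfl, hAD, hwA⟩
  have hzorn : ∀ c ⊆ S, IsChain (· ≤ ·) c → ∃ ub ∈ S, ∀ z ∈ c, z ≤ ub := by
    intro c hcS hchain
    rcases c.eq_empty_or_nonempty with rfl | ⟨E₁, hE₁⟩
    · exact ⟨A, hAS, fun z hz => absurd hz (Set.notMem_empty z)⟩
    have hdir : DirectedOn (· ≤ ·) c := hchain.directedOn
    set U₀ : Submodule ℂ H := sSup c with hU₀
    have hmemU₀ : ∀ u : H, u ∈ U₀ ↔ ∃ E ∈ c, u ∈ E := fun u =>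
      Submodule.mem_sSup_of_directed ⟨E₁, hE₁⟩ hdir
    set U : Submodule ℂ H := U₀.topologicalClosure with hU
    -- maximal trace on F among the chain
    have hTne : {q : Submodule ℂ ↥F | ∃ E ∈ c, q = E.comap F.subtype}.Nonempty :=
      ⟨E₁.comap F.subtype, E₁, hE₁, rfl⟩
    obtain ⟨m, ⟨E₀, hE₀c, hmE₀⟩, hmmax⟩ :=
      (IsNoetherian.wellFoundedGT (R := ℂ) (M := ↥F)
        inferInstance).wf.has_min _ hTne
    have htrace : ∀ E ∈ c, ∀ u : H, u ∈ E → u ∈ F → u ∈ E₀ := by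
      intro E hEc u huE huF
      rcases hchain.total hEc hE₀c with h | h
      · exact h huE
      · have hle : E₀.comap F.subtype ≤ E.comap F.subtype :=
          Submodule.comap_mono h
        have hnlt : ¬ (E.comap F.subtype > m) := hmmax _ ⟨E, hEc, rfl⟩
        rw [hmE₀] at hnlt
        rcases hle.lt_or_eq with hlt | heq
        · exact absurd hlt hnlt
        · have : (⟨u, huF⟩ : ↥F) ∈ E.comap F.subtype := huE
          rw [← heq] at this
          exact this
    have hwU : w ∉ U := by
      intro hwU
      have h1 : P w ∈ P '' closure (U₀ : Set H) := ⟨w, hwU, rfl⟩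
      have h2 : P '' closure (U₀ : Set H) ⊆ closure (P '' (U₀ : Set H)) :=
        image_closure_subset_closure_image hPcont
      have h3 : P '' (U₀ : Set H) ⊆ (E₀ : Set H) ∩ (F : Set H) := by
        rintro _ ⟨u, huU₀, rfl⟩
        obtain ⟨E, hEc, huE⟩ := (hmemU₀ u).1 huU₀
        have hPuE : P u ∈ E := hPmem E (hcS hEc).1 u huE
        exact ⟨htrace E hEc (P u) hPuE (hPF u), hPF u⟩
      have h4 : closure (P '' (U₀ : Set H)) ⊆ (E₀ : Set H) ∩ (F : Set H) :=
        closure_minimal h3 (((hcS hE₀c).1.1).inter hFclosed)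
      have : P w ∈ (E₀ : Set H) := (h4 (h2 h1)).1
      rw [hPid w hwF] at this
      exact (hcS hE₀c).2.2.2 this
    refine ⟨U, ⟨⟨?_, ?_⟩, ?_, ?_, hwU⟩, ?_⟩
    · exact U₀.isClosed_topologicalClosure
    · intro g u hu
      have hcl : (U : Set H) = closure (U₀ : Set H) := rfl
      have hinv : ∀ x ∈ (U₀ : Set H), (ρ g : H →L[ℂ] H) x ∈ (U₀ : Set H) := by
        intro x hx
        obtain ⟨E, hEc, hxE⟩ := (hmemU₀ x).1 hx
        exact (hmemU₀ _).2 ⟨E, hEc, (hcS hEc).1.2 g x hxE⟩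
      have : (ρ g : H →L[ℂ] H) u ∈ (ρ g : H →L[ℂ] H) '' closure (U₀ : Set H) :=
        ⟨u, hu, rfl⟩
      have hsub : (ρ g : H →L[ℂ] H) '' closure (U₀ : Set H)
          ⊆ closure ((ρ g : H →L[ℂ] H) '' (U₀ : Set H)) :=
        image_closure_subset_closure_image (ρ g : H →L[ℂ] H).continuous
      have hsub2 : closure ((ρ g : H →L[ℂ] H) '' (U₀ : Set H)) ⊆ closure (U₀ : Set H) :=
        closure_mono (by rintro _ ⟨x, hx, rfl⟩; exact hinv x hx)
      exact hsub2 (hsub this)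
    · exact le_trans ((hcS hE₁).2.1) (le_trans (le_sSup hE₁) U₀.le_topologicalClosure)
    · exact Submodule.topologicalClosure_minimal _
        (sSup_le fun E hEc => (hcS hEc).2.2.1) hDclosed
    · exact fun z hz => le_trans (le_sSup hz) U₀.le_topologicalClosure
  obtain ⟨C, hCmax⟩ := zorn_le₀ S hzorn
  have hCS : C ∈ S := hCmax.1
  have hCD : C < D := lt_of_le_of_ne hCS.2.2.1 (fun h => hCS.2.2.2 (h ▸ hwD))
  refine ⟨C, D, hCS.1, hDinv, hCS.2.1, hCD, hDB, ?_⟩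
  rintro ⟨E, hE, hCE, hED⟩
  by_cases hwE : w ∈ E
  · have hAE : A ≤ E := le_trans hCS.2.1 hCE.le
    have hEB : E ≤ B := le_trans hED.le hDB
    exact hED.not_ge (hDmin E ⟨hE, hAE, hEB, hwE⟩)
  · have hES : E ∈ S := ⟨hE, le_trans hCS.2.1 hCE.le, hED.le, hwE⟩
    exact hCE.not_ge (hCmax.2 hES hCE.le)



/-- A compact Hilbert representation of a locally compact, Hausdorff,
totally disconnected group has, between any two nested closed invariant subspaces,
a pair of closed invariant subspaces with nothing strictly in between (an
irreducible subquotient); in particular if `H ≠ 0` it has an irreducible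
subquotient. -/
theorem compact_rep_td_has_irreducible_subquotient
    {G : Type*} [Group G] [TopologicalSpace G] [IsTopologicalGroup G]
    [LocallyCompactSpace G] [T2Space G] [TotallyDisconnectedSpace G]
    {H : Type*} [NormedAddCommGroup H] [InnerProductSpace ℂ H] [CompleteSpace H]
    (ρ : G →* (H →L[ℂ] H)ˣ)
    (hcont : Continuous fun p : G × H => (ρ p.1 : H →L[ℂ] H) p.2)
    (hcomp : ∀ K : Subgroup G, IsCompact (K : Set G) → IsOpen (K : Set G) →
      ∀ [MeasurableSpace ↥K] [BorelSpace ↥K] (μ : Measure ↥K),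
        μ.IsHaarMeasure → IsProbabilityMeasure μ →
          IsCompactOperator (fun v : H => ∫ k : ↥K, (ρ (k : G) : H →L[ℂ] H) v ∂μ)) :
    (∀ A B : Submodule ℂ H, IsClosedInvariantSubspace ρ A →
      IsClosedInvariantSubspace ρ B → A < B →
      ∃ C D : Submodule ℂ H, IsClosedInvariantSubspace ρ C ∧
        IsClosedInvariantSubspace ρ D ∧ A ≤ C ∧ C < D ∧ D ≤ B ∧
        ¬∃ E : Submodule ℂ H, IsClosedInvariantSubspace ρ E ∧ C < E ∧ E < D) ∧
    ((∃ v : H, v ≠ 0) →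
      ∃ C D : Submodule ℂ H, IsClosedInvariantSubspace ρ C ∧
        IsClosedInvariantSubspace ρ D ∧ C < D ∧
        ¬∃ E : Submodule ℂ H, IsClosedInvariantSubspace ρ E ∧ C < E ∧ E < D) := by
  constructor
  · exact fun A B hA hB hAB => aux_between ρ hcont hcomp A B hA hB hAB
  · rintro ⟨v, hv⟩
    have hbot : IsClosedInvariantSubspace ρ (⊥ : Submodule ℂ H) := by
      refine ⟨by simp only [Submodule.bot_coe]; exact isClosed_singleton, ?_⟩
      intro g u hu
      rw [Submodule.mem_bot] at hu ⊢
      rw [hu, map_zero]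
    have htop : IsClosedInvariantSubspace ρ (⊤ : Submodule ℂ H) :=
      ⟨by simp only [Submodule.top_coe]; exact isClosed_univ, fun _ _ _ => trivial⟩
    have hlt : (⊥ : Submodule ℂ H) < ⊤ := by
      refine lt_of_le_of_ne bot_le fun h => hv ?_
      have : v ∈ (⊥ : Submodule ℂ H) := h ▸ Submodule.mem_top
      rwa [Submodule.mem_bot] at this
    obtain ⟨C, D, h1, h2, _, h4, _, h6⟩ :=
      aux_between ρ hcont hcomp ⊥ ⊤ hbot htop hlt
    exact ⟨C, D, h1, h2, h4, h6⟩
end
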